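/- Let Δt ≥ 0 and H ≥ 0 be real numbers, and let (a_n), (b_n), (c_n), (d_n) be sequences of nonnegative real numbers (indexed by integers n ≥ 0) such that for every integer l ≥ 0, a_l + Δt·Σ_{n=0}^{l} b_n ≤ Δt·Σ_{n=0}^{l} d_n·a_n + Δt·Σ_{n=0}^{l} c_n + H. Suppose moreover that Δt·d_n < 1 for all n. Then for every integer l ≥ 0, a_l + Δt·Σ_{n=0}^{l} b_n ≤ exp( Δt·Σ_{n=0}^{l} d_n/(1 − Δt·d_n) ) · ( Δt·Σ_{n=0}^{l} c_n + H ). -/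

import Mathlib

namespace DiscreteGronwallPaper

/-- **Discrete Gronwall Lemma.**
Let `Δt ≥ 0`, `H ≥ 0`, and let `a b c d : ℕ → ℝ` be nonnegative sequences such that
for every `l ≥ 0`,
`a l + Δt·Σ_{n=0}^{l} b n ≤ Δt·Σ_{n=0}^{l} (d n * a n) + Δt·Σ_{n=0}^{l} c n + H`.
If `Δt * d n < 1` for all `n`, then for every `l ≥ 0`,
`a l + Δt·Σ_{n=0}^{l} b n ≤ exp(Δt·Σ_{n=0}^{l} d n / (1 - Δt * d n)) · (Δt·Σ_{n=0}^{l} c n + H)`. -/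
theorem discrete_gronwall
    (Δt H : ℝ) (hΔt : 0 ≤ Δt) (hH : 0 ≤ H)
    (a b c d : ℕ → ℝ)
    (ha : ∀ n, 0 ≤ a n) (hb : ∀ n, 0 ≤ b n) (hc : ∀ n, 0 ≤ c n) (hd : ∀ n, 0 ≤ d n)
    (hbound : ∀ l : ℕ,
      a l + Δt * ∑ n ∈ Finset.range (l + 1), b n ≤
        Δt * ∑ n ∈ Finset.range (l + 1), d n * a n
          + Δt * ∑ n ∈ Finset.range (l + 1), c n + H)
    (hsmall : ∀ n : ℕ, Δt * d n < 1) :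
    ∀ l : ℕ,
      a l + Δt * ∑ n ∈ Finset.range (l + 1), b n ≤
        Real.exp (Δt * ∑ n ∈ Finset.range (l + 1), d n / (1 - Δt * d n))
          * (Δt * ∑ n ∈ Finset.range (l + 1), c n + H) := by
  have hpos : ∀ n, 0 < 1 - Δt * d n := fun n => by linarith [hsmall n]
  set S : ℕ → ℝ := fun l => Δt * ∑ n ∈ Finset.range (l + 1), c n + H with hS
  set M : ℕ → ℝ := fun l => Δt * ∑ n ∈ Finset.range (l + 1), d n * a n + S l with hM
  set P : ℕ → ℝ := fun l => ∏ n ∈ Finset.range (l + 1), (1 - Δt * d n)⁻¹ with hP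
  have hSnn : ∀ l, 0 ≤ S l := fun l => by
    have h1 : 0 ≤ ∑ n ∈ Finset.range (l + 1), c n :=
      Finset.sum_nonneg fun n _ => hc n
    have h2 := mul_nonneg hΔt h1
    simp only [hS]; linarith
  have haM : ∀ l, a l ≤ M l := fun l => by
    have hb' : 0 ≤ Δt * ∑ n ∈ Finset.range (l + 1), b n :=
      mul_nonneg hΔt (Finset.sum_nonneg fun n _ => hb n)
    have := hbound l
    simp only [hM, hS]; linarith
  have hPnn : ∀ l, 0 ≤ P l := fun l =>
    Finset.prod_nonneg fun n _ => inv_nonneg.2 (hpos n).le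
  have hP1 : ∀ l, 1 ≤ P l := by
    intro l
    simp only [hP]
    calc (1:ℝ) = ∏ n ∈ Finset.range (l + 1), 1 := by simp
      _ ≤ ∏ n ∈ Finset.range (l + 1), (1 - Δt * d n)⁻¹ := by
        apply Finset.prod_le_prod (fun n _ => zero_le_one)
        intro n _
        rw [one_le_inv_iff₀]
        constructor
        · exact hpos n
        · nlinarith [mul_nonneg hΔt (hd n)]
  -- key induction: M l ≤ P l * S l
  have key : ∀ l, M l ≤ P l * S l := by
    intro l
    induction l with
    | zero =>
      have hM0 : M 0 = Δt * (d 0 * a 0) + S 0 := by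
        simp [hM, Finset.sum_range_one]
      have hda : Δt * (d 0 * a 0) ≤ Δt * d 0 * M 0 := by
        have := mul_le_mul_of_nonneg_left (haM 0) (mul_nonneg hΔt (hd 0))
        linarith [this]
      have h1 : M 0 * (1 - Δt * d 0) ≤ S 0 := by nlinarith
      have h2 : M 0 ≤ S 0 / (1 - Δt * d 0) := (le_div_iff₀ (hpos 0)).2 h1
      have hP0 : P 0 = (1 - Δt * d 0)⁻¹ := by simp [hP, Finset.prod_range_one]
      rw [hP0]
      rw [div_eq_inv_mul] at h2
      linarith
    | succ l ih =>
      have hMstep : M (l + 1) = M l + Δt * (d (l + 1) * a (l + 1)) + Δt * c (l + 1) := by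
        simp only [hM, hS, Finset.sum_range_succ]
        ring
      have hSstep : S (l + 1) = S l + Δt * c (l + 1) := by
        simp only [hS, Finset.sum_range_succ]; ring
      have hda : Δt * (d (l + 1) * a (l + 1)) ≤ Δt * d (l + 1) * M (l + 1) := by
        have := mul_le_mul_of_nonneg_left (haM (l + 1)) (mul_nonneg hΔt (hd (l + 1)))
        linarith [this]
      have hc' : 0 ≤ Δt * c (l + 1) := mul_nonneg hΔt (hc (l + 1))
      have h1 : M (l + 1) * (1 - Δt * d (l + 1)) ≤ P l * S (l + 1) := by
        have hPc : Δt * c (l + 1) ≤ P l * (Δt * c (l + 1)) := by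
          nlinarith [hP1 l]
        have : M (l + 1) * (1 - Δt * d (l + 1)) ≤ P l * S l + Δt * c (l + 1) := by
          nlinarith
        rw [hSstep]; nlinarith
      have h2 : M (l + 1) ≤ P l * S (l + 1) / (1 - Δt * d (l + 1)) :=
        (le_div_iff₀ (hpos (l + 1))).2 h1
      have hPstep : P (l + 1) = P l * (1 - Δt * d (l + 1))⁻¹ := by
        simp only [hP]
        rw [Finset.prod_range_succ]
      rw [hPstep]
      calc M (l + 1) ≤ P l * S (l + 1) / (1 - Δt * d (l + 1)) := h2
        _ = P l * (1 - Δt * d (l + 1))⁻¹ * S (l + 1) := by ring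
  -- bound P l by exp
  have hPexp : ∀ l, P l ≤
      Real.exp (Δt * ∑ n ∈ Finset.range (l + 1), d n / (1 - Δt * d n)) := by
    intro l
    have hsum : Δt * ∑ n ∈ Finset.range (l + 1), d n / (1 - Δt * d n)
        = ∑ n ∈ Finset.range (l + 1), Δt * d n / (1 - Δt * d n) := by
      rw [Finset.mul_sum]
      exact Finset.sum_congr rfl fun n _ => by ring
    rw [hsum, Real.exp_sum]
    apply Finset.prod_le_prod (fun n _ => inv_nonneg.2 (hpos n).le)
    intro n _
    have hne : (1 - Δt * d n) ≠ 0 := (hpos n).ne'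
    have h1 : (1 - Δt * d n)⁻¹ = Δt * d n / (1 - Δt * d n) + 1 := by
      field_simp
      ring
    rw [h1]
    exact Real.add_one_le_exp _
  intro l
  have h1 := hbound l
  have h2 := key l
  have h3 := hPexp l
  have h4 : P l * S l ≤
      Real.exp (Δt * ∑ n ∈ Finset.range (l + 1), d n / (1 - Δt * d n)) * S l :=
    mul_le_mul_of_nonneg_right h3 (hSnn l)
  simp only [hM, hS] at h2 h4 ⊢
  linarith

end DiscreteGronwallPaper
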